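/- Let 0 < r < 1 and set κ = 2√r/(1 − r). Then ∫_0^{π} (sin θ / √(cos²θ + κ²)) dθ = ln(1/r). Moreover, κ = 2√r/(1 − r) is the unique positive number with this property. -/

import Mathlib

open Real

lemma key_integral (c : ℝ) (hc : 0 < c) :
    (∫ θ in (0 : ℝ)..π, Real.sin θ / Real.sqrt (Real.cos θ ^ 2 + c ^ 2))
      = 2 * Real.arsinh (1 / c) := by
  have hc' : c ≠ 0 := hc.ne'
  have hderiv : ∀ θ ∈ Set.uIcc (0:ℝ) π,
      HasDerivAt (fun θ => -Real.arsinh (Real.cos θ / c))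
        (Real.sin θ / Real.sqrt (Real.cos θ ^ 2 + c ^ 2)) θ := by
    intro θ _
    have h1 : HasDerivAt (fun θ => Real.cos θ / c) (-Real.sin θ / c) θ :=
      (Real.hasDerivAt_cos θ).div_const c
    have h2 := ((Real.hasDerivAt_arsinh (Real.cos θ / c)).comp θ h1).neg
    have hsq : Real.sqrt (Real.cos θ ^ 2 + c ^ 2)
        = c * Real.sqrt (1 + (Real.cos θ / c) ^ 2) := by
      rw [← Real.sqrt_sq hc.le, ← Real.sqrt_mul (sq_nonneg c)]
      congr 1
      field_simp
      simp only [Real.sqrt_sq hc.le]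
      ring
    have hpos : (0:ℝ) < Real.sqrt (1 + (Real.cos θ / c) ^ 2) := by
      apply Real.sqrt_pos.2
      positivity
    refine HasDerivAt.congr_deriv h2 ?_
    rw [hsq]
    field_simp
  have hcont : Continuous fun θ : ℝ => Real.sin θ / Real.sqrt (Real.cos θ ^ 2 + c ^ 2) := by
    apply Real.continuous_sin.div
    · exact ((Real.continuous_cos.pow 2).add continuous_const).sqrt
    · intro θ
      have : (0:ℝ) < Real.cos θ ^ 2 + c ^ 2 := by positivity
      exact (Real.sqrt_pos.2 this).ne'
  rw [intervalIntegral.integral_eq_sub_of_hasDerivAt hderiv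
    (hcont.intervalIntegrable 0 π)]
  simp [Real.cos_pi, Real.arsinh_neg, neg_div]
  ring

lemma kappa_val (r : ℝ) (hr : 0 < r) (hr1 : r < 1) :
    2 * Real.arsinh (1 / (2 * Real.sqrt r / (1 - r))) = Real.log (1 / r) := by
  have hs : 0 < Real.sqrt r := Real.sqrt_pos.2 hr
  have hs2 : Real.sqrt r ^ 2 = r := Real.sq_sqrt hr.le
  have h1r : 0 < 1 - r := by linarith
  have hx : 1 / (2 * Real.sqrt r / (1 - r)) = (1 - r) / (2 * Real.sqrt r) := by
    field_simp
  rw [hx]; simp only [Real.arsinh]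
  have hsqrt : Real.sqrt (1 + ((1 - r) / (2 * Real.sqrt r)) ^ 2)
      = (1 + r) / (2 * Real.sqrt r) := by
    rw [show 1 + ((1 - r) / (2 * Real.sqrt r)) ^ 2 = ((1 + r) / (2 * Real.sqrt r)) ^ 2 by
      field_simp
      nlinarith [hs2]]
    exact Real.sqrt_sq (by positivity)
  rw [hsqrt]
  have : (1 - r) / (2 * Real.sqrt r) + (1 + r) / (2 * Real.sqrt r) = (Real.sqrt r)⁻¹ := by
    rw [← add_div, show 1 - r + (1 + r) = 2 by ring, eq_comm, inv_eq_iff_eq_inv,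
      inv_div]
    field_simp
  rw [this, Real.log_inv, Real.log_sqrt hr.le, one_div, Real.log_inv]
  ring

/-- For the optimal π pulse, `κ = 2√r/(1 - r)` satisfies the magnetization
loss constraint `∫₀^{π} sin θ/√(cos²θ + κ²) dθ = ln(1/r)`, and it is the
unique positive number with this property. -/
theorem stmt_7 (r κ : ℝ) (hr : 0 < r) (hr1 : r < 1) (hκ : κ = 2 * Real.sqrt r / (1 - r)) :
    (∫ θ in (0 : ℝ)..π, Real.sin θ / Real.sqrt (Real.cos θ ^ 2 + κ ^ 2))
        = Real.log (1 / r) ∧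
      ∀ κ' : ℝ, 0 < κ' →
        (∫ θ in (0 : ℝ)..π, Real.sin θ / Real.sqrt (Real.cos θ ^ 2 + κ' ^ 2))
            = Real.log (1 / r) →
          κ' = κ := by
  have hs : 0 < Real.sqrt r := Real.sqrt_pos.2 hr
  have h1r : 0 < 1 - r := by linarith
  have hκpos : 0 < κ := by rw [hκ]; positivity
  have hmain : (∫ θ in (0 : ℝ)..π, Real.sin θ / Real.sqrt (Real.cos θ ^ 2 + κ ^ 2))
      = Real.log (1 / r) := by
    rw [key_integral κ hκpos, hκ, kappa_val r hr hr1]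
  refine ⟨hmain, ?_⟩
  intro κ' hκ' hint
  rw [key_integral κ' hκ'] at hint
  have h2 : 2 * Real.arsinh (1 / κ') = 2 * Real.arsinh (1 / κ) := by
    rw [hint, hκ, kappa_val r hr hr1]
  have h3 : Real.arsinh (1 / κ') = Real.arsinh (1 / κ) := by linarith
  have h4 : 1 / κ' = 1 / κ := Real.arsinh_injective h3
  field_simp at h4
  exact h4.symm
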